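/- Let A₁, …, A_m ∈ C^{n×n} and suppose there exist real numbers γ₁, …, γ_m and an integer ℓ such that Σ_{k=1}^m γ_k + Σ_{k=1}^m θ(e^{−iγ_k} A_k) < π + 2πℓ and Σ_{k=1}^m γ_k − Σ_{k=1}^m θ(e^{−iγ_k} A_k) > −π + 2πℓ. Then the matrix I + A_m A_{m−1} ⋯ A₁ is invertible. -/

import Mathlib

open scoped Matrix

noncomputable def evnorm {n : ℕ} (x : Fin n → ℂ) : ℝ :=
  Real.sqrt ((star x ⬝ᵥ x).re)

noncomputable def qform {n : ℕ} (A : Matrix (Fin n) (Fin n) ℂ) (x : Fin n → ℂ) : ℂ :=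
  star x ⬝ᵥ A.mulVec x

noncomputable def nnr {n : ℕ} (A : Matrix (Fin n) (Fin n) ℂ) : Set ℂ :=
  {z | ∃ x : Fin n → ℂ, x ≠ 0 ∧ A.mulVec x ≠ 0 ∧
    z = qform A x / ((evnorm x * evnorm (A.mulVec x) : ℝ) : ℂ)}

noncomputable def singAngle {n : ℕ} (A : Matrix (Fin n) (Fin n) ℂ) : ℝ :=
  sSup {θ : ℝ | ∃ x : Fin n → ℂ, x ≠ 0 ∧ A.mulVec x ≠ 0 ∧
    θ = Real.arccos ((qform A x).re / (evnorm x * evnorm (A.mulVec x)))}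

noncomputable def revProd {n m : ℕ} (A : Fin m → Matrix (Fin n) (Fin n) ℂ) :
    Matrix (Fin n) (Fin n) ℂ :=
  (List.ofFn A).reverse.prod

/-! ### Auxiliary material -/

section ArccosAux

lemma my_arccos_anti {x y : ℝ} (h : x ≤ y) : Real.arccos y ≤ Real.arccos x := by
  unfold Real.arccos
  have := Real.monotone_arcsin h
  linarith

lemma my_arccos_cos_le {t : ℝ} (ht : 0 ≤ t) : Real.arccos (Real.cos t) ≤ t := by
  rcases le_or_gt t Real.pi with h | h
  · exact le_of_eq (Real.arccos_cos ht h)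
  · exact (Real.arccos_le_pi _).trans h.le

end ArccosAux

section AngleTriangle

open InnerProductGeometry Real

variable {V : Type*} [NormedAddCommGroup V] [InnerProductSpace ℝ V]

local notation "⟪" x ", " y "⟫" => @inner ℝ V _ x y

lemma my_angle_triangle_unit {x y z : V} (hx : ‖x‖ = 1) (hy : ‖y‖ = 1) (hz : ‖z‖ = 1) :
    angle x z ≤ angle x y + angle y z := by
  have hp1 : |⟪x, y⟫| ≤ 1 := by
    have := abs_real_inner_le_norm x y
    rwa [hx, hy, one_mul] at this
  have hq1 : |⟪y, z⟫| ≤ 1 := by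
    have := abs_real_inner_le_norm y z
    rwa [hy, hz, one_mul] at this
  have hxx : ⟪x, x⟫ = 1 := by rw [real_inner_self_eq_norm_sq, hx]; norm_num
  have hyy : ⟪y, y⟫ = 1 := by rw [real_inner_self_eq_norm_sq, hy]; norm_num
  have hzz : ⟪z, z⟫ = 1 := by rw [real_inner_self_eq_norm_sq, hz]; norm_num
  have huw : ⟪x - ⟪x, y⟫ • y, z - ⟪y, z⟫ • y⟫ = ⟪x, z⟫ - ⟪x, y⟫ * ⟪y, z⟫ := by
    simp only [inner_sub_left, inner_sub_right, real_inner_smul_left, real_inner_smul_right,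
      hyy, real_inner_comm y x, real_inner_comm y z]
    ring
  have hu2 : ‖x - ⟪x, y⟫ • y‖ ^ 2 = 1 - ⟪x, y⟫ ^ 2 := by
    rw [← real_inner_self_eq_norm_sq]
    simp only [inner_sub_left, inner_sub_right, real_inner_smul_left, real_inner_smul_right,
      hyy, hxx, real_inner_comm y x]
    ring
  have hw2 : ‖z - ⟪y, z⟫ • y‖ ^ 2 = 1 - ⟪y, z⟫ ^ 2 := by
    rw [← real_inner_self_eq_norm_sq]
    simp only [inner_sub_left, inner_sub_right, real_inner_smul_left, real_inner_smul_right,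
      hyy, hzz, real_inner_comm y z]
    ring
  have hunorm : ‖x - ⟪x, y⟫ • y‖ = Real.sqrt (1 - ⟪x, y⟫ ^ 2) := by
    rw [← hu2, Real.sqrt_sq (norm_nonneg _)]
  have hwnorm : ‖z - ⟪y, z⟫ • y‖ = Real.sqrt (1 - ⟪y, z⟫ ^ 2) := by
    rw [← hw2, Real.sqrt_sq (norm_nonneg _)]
  have hxyang : angle x y = Real.arccos ⟪x, y⟫ := by
    rw [angle, hx, hy]; norm_num
  have hyzang : angle y z = Real.arccos ⟪y, z⟫ := by
    rw [angle, hy, hz]; norm_num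
  have hkey : Real.cos (angle x y + angle y z) ≤ ⟪x, z⟫ := by
    rw [hxyang, hyzang, Real.cos_add,
      Real.cos_arccos (neg_le_of_abs_le hp1) (le_of_abs_le hp1),
      Real.cos_arccos (neg_le_of_abs_le hq1) (le_of_abs_le hq1),
      Real.sin_arccos, Real.sin_arccos]
    have hlow : -(‖x - ⟪x, y⟫ • y‖ * ‖z - ⟪y, z⟫ • y‖) ≤ ⟪x - ⟪x, y⟫ • y, z - ⟪y, z⟫ • y⟫ :=
      neg_le_of_abs_le (abs_real_inner_le_norm _ _)
    rw [hunorm, hwnorm, huw] at hlow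
    linarith
  have hxz : angle x z = Real.arccos ⟪x, z⟫ := by rw [angle, hx, hz]; norm_num
  rw [hxz]
  calc Real.arccos ⟪x, z⟫ ≤ Real.arccos (Real.cos (angle x y + angle y z)) :=
        my_arccos_anti hkey
    _ ≤ angle x y + angle y z :=
        my_arccos_cos_le (add_nonneg (angle_nonneg x y) (angle_nonneg y z))

lemma my_angle_triangle (x y z : V) : angle x z ≤ angle x y + angle y z := by
  rcases eq_or_ne x 0 with rfl | hx
  · rw [angle_zero_left, angle_zero_left]
    linarith [angle_nonneg y z]
  rcases eq_or_ne z 0 with rfl | hz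
  · rw [angle_zero_right, angle_zero_right]
    linarith [angle_nonneg x y]
  rcases eq_or_ne y 0 with rfl | hy
  · rw [angle_zero_right, angle_zero_left]
    linarith [angle_le_pi x z]
  have hxpos : (0 : ℝ) < ‖x‖⁻¹ := inv_pos.2 (norm_pos_iff.2 hx)
  have hypos : (0 : ℝ) < ‖y‖⁻¹ := inv_pos.2 (norm_pos_iff.2 hy)
  have hzpos : (0 : ℝ) < ‖z‖⁻¹ := inv_pos.2 (norm_pos_iff.2 hz)
  have h1 : angle x z = angle (‖x‖⁻¹ • x) (‖z‖⁻¹ • z) := by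
    rw [angle_smul_left_of_pos _ _ hxpos, angle_smul_right_of_pos _ _ hzpos]
  have h2 : angle x y = angle (‖x‖⁻¹ • x) (‖y‖⁻¹ • y) := by
    rw [angle_smul_left_of_pos _ _ hxpos, angle_smul_right_of_pos _ _ hypos]
  have h3 : angle y z = angle (‖y‖⁻¹ • y) (‖z‖⁻¹ • z) := by
    rw [angle_smul_left_of_pos _ _ hypos, angle_smul_right_of_pos _ _ hzpos]
  rw [h1, h2, h3]
  exact my_angle_triangle_unit (norm_smul_inv_norm hx) (norm_smul_inv_norm hy)
    (norm_smul_inv_norm hz)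

end AngleTriangle

section Bridge

noncomputable def toE {n : ℕ} (x : Fin n → ℂ) : EuclideanSpace ℂ (Fin n) :=
  (WithLp.equiv 2 (Fin n → ℂ)).symm x

noncomputable def ang {n : ℕ} (x y : Fin n → ℂ) : ℝ :=
  Real.arccos ((star x ⬝ᵥ y).re / (evnorm x * evnorm y))

lemma inner_toE {n : ℕ} (x y : Fin n → ℂ) :
    (inner ℂ (toE x) (toE y) : ℂ) = star x ⬝ᵥ y := by
  simp [toE, PiLp.inner_apply, dotProduct, RCLike.inner_apply,
    WithLp.equiv_symm_apply, mul_comm]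

lemma norm_toE {n : ℕ} (x : Fin n → ℂ) : ‖toE x‖ = evnorm x := by
  have h : (star x ⬝ᵥ x).re = ‖toE x‖ ^ 2 := by
    rw [← inner_toE, inner_self_eq_norm_sq_to_K]
    norm_cast
  unfold evnorm
  rw [h, Real.sqrt_sq (norm_nonneg _)]

lemma toE_ne_zero {n : ℕ} {x : Fin n → ℂ} (hx : x ≠ 0) : toE x ≠ 0 := by
  intro h
  apply hx
  have h0 : toE (0 : Fin n → ℂ) = 0 := rfl
  exact (WithLp.equiv 2 (Fin n → ℂ)).symm.injective (h.trans h0.symm)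

lemma ang_eq {n : ℕ} (x y : Fin n → ℂ) :
    ang x y = @InnerProductGeometry.angle (EuclideanSpace ℂ (Fin n)) _
      (InnerProductSpace.complexToReal) (toE x) (toE y) := by
  letI : InnerProductSpace ℝ (EuclideanSpace ℂ (Fin n)) := InnerProductSpace.complexToReal
  have hinner : (inner ℝ (toE x) (toE y) : ℝ) = (star x ⬝ᵥ y).re := by
    rw [real_inner_eq_re_inner ℂ, inner_toE]
    simp [RCLike.re_to_complex]
  rw [InnerProductGeometry.angle, ang, hinner, norm_toE, norm_toE]

lemma ang_triangle {n : ℕ} (x y z : Fin n → ℂ) : ang x z ≤ ang x y + ang y z := by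
  letI : InnerProductSpace ℝ (EuclideanSpace ℂ (Fin n)) := InnerProductSpace.complexToReal
  rw [ang_eq, ang_eq, ang_eq]
  exact my_angle_triangle (toE x) (toE y) (toE z)

lemma ang_self {n : ℕ} {x : Fin n → ℂ} (hx : x ≠ 0) : ang x x = 0 := by
  letI : InnerProductSpace ℝ (EuclideanSpace ℂ (Fin n)) := InnerProductSpace.complexToReal
  rw [ang_eq]
  exact InnerProductGeometry.angle_self (toE_ne_zero hx)

end Bridge

section ChainLemma

lemma singAngle_nonneg {n : ℕ} (A : Matrix (Fin n) (Fin n) ℂ) : 0 ≤ singAngle A := by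
  apply Real.sSup_nonneg
  rintro θ ⟨x, -, -, rfl⟩
  exact Real.arccos_nonneg _

lemma ang_le_singAngle {n : ℕ} (A : Matrix (Fin n) (Fin n) ℂ) {x : Fin n → ℂ}
    (hx : x ≠ 0) (hAx : A.mulVec x ≠ 0) : ang x (A.mulVec x) ≤ singAngle A := by
  apply le_csSup
  · refine ⟨Real.pi, ?_⟩
    rintro θ ⟨y, -, -, rfl⟩
    exact Real.arccos_le_pi _
  · exact ⟨x, hx, hAx, rfl⟩

lemma chain_angle {n : ℕ} (L : List (Matrix (Fin n) (Fin n) ℂ)) (v : Fin n → ℂ)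
    (hv : v ≠ 0) (hLv : L.prod.mulVec v ≠ 0) :
    ang v (L.prod.mulVec v) ≤ (L.map singAngle).sum := by
  induction L with
  | nil =>
      simp only [List.prod_nil, Matrix.one_mulVec, List.map_nil, List.sum_nil]
      exact le_of_eq (ang_self hv)
  | cons M T ih =>
      have hrw : (M :: T).prod.mulVec v = M.mulVec (T.prod.mulVec v) := by
        rw [List.prod_cons, Matrix.mulVec_mulVec]
      set w := T.prod.mulVec v with hwdef
      rw [hrw] at hLv ⊢
      have hw : w ≠ 0 := by
        intro h0
        apply hLv
        rw [h0, Matrix.mulVec_zero]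
      calc ang v (M.mulVec w) ≤ ang v w + ang w (M.mulVec w) := ang_triangle v w _
        _ ≤ (T.map singAngle).sum + singAngle M :=
            add_le_add (ih hw) (ang_le_singAngle M hw hLv)
        _ = ((M :: T).map singAngle).sum := by
            rw [List.map_cons, List.sum_cons]; ring

end ChainLemma

section ProdSmul

lemma map_smul_list_prod {m n : ℕ} (c : Fin m → ℂ) (A : Fin m → Matrix (Fin n) (Fin n) ℂ)
    (l : List (Fin m)) :
    (l.map fun k => c k • A k).prod = (l.map c).prod • (l.map A).prod := by
  induction l with
  | nil => simp
  | cons a l ih =>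
      simp only [List.map_cons, List.prod_cons, ih, smul_mul_assoc, mul_smul_comm, smul_smul]
      rw [mul_comm]

lemma revProd_smul {m n : ℕ} (c : Fin m → ℂ) (A : Fin m → Matrix (Fin n) (Fin n) ℂ) :
    (List.ofFn (fun k => c k • A k)).reverse.prod = (∏ k, c k) • revProd A := by
  rw [List.ofFn_eq_map, ← List.map_reverse, map_smul_list_prod]
  congr 1
  · rw [List.map_reverse, List.prod_reverse, ← List.ofFn_eq_map, List.prod_ofFn]
  · rw [revProd, List.ofFn_eq_map, ← List.map_reverse]

end ProdSmul

theorem stmt10 {n m : ℕ} (Ak : Fin m → Matrix (Fin n) (Fin n) ℂ) (γ : Fin m → ℝ) (l : ℤ)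
    (h1 : (∑ k, γ k) + (∑ k, singAngle (Complex.exp (-(γ k : ℂ) * Complex.I) • Ak k)) <
        Real.pi + 2 * Real.pi * l)
    (h2 : (∑ k, γ k) - (∑ k, singAngle (Complex.exp (-(γ k : ℂ) * Complex.I) • Ak k)) >
        -Real.pi + 2 * Real.pi * l) :
    IsUnit (1 + revProd Ak) := by
  classical
  set B : Fin m → Matrix (Fin n) (Fin n) ℂ :=
    fun k => Complex.exp (-(γ k : ℂ) * Complex.I) • Ak k with hBdef
  set θs : ℝ := ∑ k, singAngle (B k) with hθsdef
  set t : ℝ := ∑ k, γ k with htdef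
  by_contra hUnit
  have hdet : (1 + revProd Ak).det = 0 := by
    by_contra hd
    exact hUnit ((Matrix.isUnit_iff_isUnit_det _).2 (isUnit_iff_ne_zero.2 hd))
  obtain ⟨v, hv, hveq⟩ := (Matrix.exists_mulVec_eq_zero_iff).2 hdet
  have hMv : (revProd Ak).mulVec v = -v := by
    have h := hveq
    rw [Matrix.add_mulVec, Matrix.one_mulVec] at h
    linear_combination (norm := module) h
  set c : ℂ := Complex.exp (-(t : ℂ) * Complex.I) with hcdef
  have hc : c ≠ 0 := Complex.exp_ne_zero _
  have hprodc : (∏ k, Complex.exp (-(γ k : ℂ) * Complex.I)) = c := by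
    rw [← Complex.exp_sum, hcdef]
    congr 1
    rw [htdef]
    push_cast
    simp only [neg_mul]
    rw [Finset.sum_neg_distrib, Finset.sum_mul]
  have hw : (List.ofFn B).reverse.prod.mulVec v = (-c) • v := by
    rw [hBdef, revProd_smul, hprodc, Matrix.smul_mulVec, hMv, smul_neg, ← neg_smul]
  have hw0 : (-c) • v ≠ 0 := smul_ne_zero (neg_ne_zero.2 hc) hv
  have hchain := chain_angle ((List.ofFn B).reverse) v hv (by rw [hw]; exact hw0)
  rw [hw] at hchain
  have hsum : (((List.ofFn B).reverse).map singAngle).sum = θs := by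
    rw [List.map_reverse, List.sum_reverse, List.map_ofFn, List.sum_ofFn]
    rfl
  rw [hsum] at hchain
  -- compute the angle between v and (-c) • v
  have hev : evnorm v ≠ 0 := by
    rw [← norm_toE]
    exact norm_ne_zero_iff.2 (toE_ne_zero hv)
  have hcre : c.re = Real.cos t := by
    have : -(t : ℂ) * Complex.I = ((-t : ℝ) : ℂ) * Complex.I := by push_cast; ring
    rw [hcdef, this, Complex.exp_ofReal_mul_I_re, Real.cos_neg]
  have habs : ‖c‖ = 1 := by
    rw [hcdef, Complex.norm_exp]
    simp
  have hang : ang v ((-c) • v) = Real.arccos (-(Real.cos t)) := by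
    unfold ang
    have h1' : star v ⬝ᵥ ((-c) • v) = (-c) * (star v ⬝ᵥ v) := by
      rw [dotProduct_smul, smul_eq_mul]
    have hself : (star v ⬝ᵥ v) = ((evnorm v : ℂ) ^ 2) := by
      rw [← norm_toE, ← inner_toE, inner_self_eq_norm_sq_to_K]
      norm_cast
    have h2' : evnorm ((-c) • v) = evnorm v := by
      rw [← norm_toE, ← norm_toE]
      have : toE ((-c) • v) = (-c) • toE v := rfl
      rw [this, norm_smul]
      simp [habs]
    rw [h1', h2', hself]
    have hre : ((-c) * ((evnorm v : ℂ) ^ 2)).re = -(Real.cos t) * (evnorm v) ^ 2 := by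
      rw [← Complex.ofReal_pow, Complex.mul_re, Complex.ofReal_re, Complex.ofReal_im,
        Complex.neg_re, Complex.neg_im, hcre]
      ring
    rw [hre]
    have hdiv : (-(Real.cos t) * (evnorm v) ^ 2) / (evnorm v * evnorm v) = -(Real.cos t) := by
      rw [← pow_two, mul_div_assoc, div_self (pow_ne_zero 2 hev), mul_one]
    rw [hdiv]
  rw [hang, Real.arccos_neg] at hchain
  -- final contradiction
  have hθ0 : 0 ≤ θs := Finset.sum_nonneg fun k _ => singAngle_nonneg _
  set t' : ℝ := t - 2 * Real.pi * l with ht'def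
  have hteq : t = t' + (l : ℝ) * (2 * Real.pi) := by rw [ht'def]; ring
  have hcos : Real.cos t = Real.cos t' := by
    rw [hteq, Real.cos_add_int_mul_two_pi]
  have ht'1 : t' + θs < Real.pi := by linarith
  have ht'2 : -Real.pi + θs < t' := by linarith
  have harccos : Real.arccos (Real.cos t') = |t'| := by
    rcases le_or_gt 0 t' with h | h
    · rw [abs_of_nonneg h, Real.arccos_cos h (by linarith)]
    · rw [abs_of_neg h, ← Real.cos_neg, Real.arccos_cos (by linarith) (by linarith)]
  rw [hcos, harccos] at hchain
  rcases abs_cases t' with ⟨he, -⟩ | ⟨he, -⟩ <;> rw [he] at hchain <;> linarith
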